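/- Let J be a tridiagonal matrix in M^+. Its eigenvalues α_1 > ... > α_n are real and simple, and the eigenvector v^k corresponding to α_k satisfies s^-(v^k) = s^+(v^k) = k - 1; in particular v^1 has no sign changes and v^n has entries of strictly alternating sign. -/

import Mathlib

open Matrix Polynomial

/-- Number of sign changes in a list of reals (adjacent pairs with negative product). -/
noncomputable def countSignChanges (l : List ℝ) : ℕ :=
  ((l.zip l.tail).filter (fun p => decide (p.1 * p.2 < 0))).length

/-- `s⁻(z)`: number of sign changes after deleting all zero entries. -/
noncomputable def sMinus {n : ℕ} (z : Fin n → ℝ) : ℕ :=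
  countSignChanges ((List.ofFn z).filter (fun x => decide (x ≠ 0)))

/-- `y` is obtained from `z` by replacing every zero entry by `+1` or `-1`. -/
def IsCompletion {n : ℕ} (z y : Fin n → ℝ) : Prop :=
  ∀ i, (z i ≠ 0 ∧ y i = z i) ∨ (z i = 0 ∧ (y i = 1 ∨ y i = -1))

/-- `s⁺(z)`: maximal number of sign changes over all completions of `z`. -/
noncomputable def sPlus {n : ℕ} (z : Fin n → ℝ) : ℕ :=
  sSup { m | ∃ y : Fin n → ℝ, IsCompletion z y ∧ m = countSignChanges (List.ofFn y) }

/-- All minors of `A` are nonnegative. -/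
def TotallyNonneg {n : ℕ} (A : Matrix (Fin n) (Fin n) ℝ) : Prop :=
  ∀ (k : ℕ) (r c : Fin k → Fin n), StrictMono r → StrictMono c →
    0 ≤ (A.submatrix r c).det

/-- All minors of `A` are positive. -/
def TotallyPos {n : ℕ} (A : Matrix (Fin n) (Fin n) ℝ) : Prop :=
  ∀ (k : ℕ) (r c : Fin k → Fin n), StrictMono r → StrictMono c →
    0 < (A.submatrix r c).det

/-- `A` is oscillatory: totally nonnegative and some positive power is totally positive. -/
def Oscillatory {n : ℕ} (A : Matrix (Fin n) (Fin n) ℝ) : Prop :=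
  TotallyNonneg A ∧ ∃ k : ℕ, 0 < k ∧ TotallyPos (A ^ k)

/-- Irreducibility of a matrix. -/
def MatIrreducible {n : ℕ} (A : Matrix (Fin n) (Fin n) ℝ) : Prop :=
  ∀ S : Set (Fin n), S.Nonempty → S ≠ Set.univ → ∃ i ∈ S, ∃ j ∈ Sᶜ, A i j ≠ 0

/-- `A ∈ M⁺`: tridiagonal with positive super- and sub-diagonal entries. -/
def MemMplus {n : ℕ} (A : Matrix (Fin n) (Fin n) ℝ) : Prop :=
  (∀ i j : Fin n, ((i : ℕ) + 1 < (j : ℕ) ∨ (j : ℕ) + 1 < (i : ℕ)) → A i j = 0) ∧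
  (∀ i j : Fin n, ((i : ℕ) + 1 = (j : ℕ) ∨ (j : ℕ) + 1 = (i : ℕ)) → 0 < A i j)


lemma prod_sign_finset {ι : Type*} (s : Finset ι) (f : ι → ℝ) (hf : ∀ i ∈ s, f i ≠ 0) :
    0 < (-1:ℝ)^((s.filter (fun i => f i < 0)).card) * ∏ i ∈ s, f i := by
  classical
  induction s using Finset.induction_on with
  | empty => simp
  | @insert a s ha ih =>
    have hfa : f a ≠ 0 := hf a (Finset.mem_insert_self a s)
    have ih' := ih (fun i hi => hf i (Finset.mem_insert_of_mem hi))
    rw [Finset.prod_insert ha, Finset.filter_insert]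
    by_cases hneg : f a < 0
    · rw [if_pos hneg, Finset.card_insert_of_notMem (by simp [ha]), pow_succ]
      have : (-1:ℝ) ^ (Finset.filter (fun i => f i < 0) s).card * -1 * (f a * ∏ i ∈ s, f i)
          = (-(f a)) * ((-1:ℝ) ^ (Finset.filter (fun i => f i < 0) s).card * ∏ i ∈ s, f i) := by
        ring
      rw [this]
      exact mul_pos (by linarith) ih'
    · rw [if_neg hneg]
      have hpos : 0 < f a := lt_of_le_of_ne (not_lt.mp hneg) (Ne.symm hfa)
      have : (-1:ℝ) ^ (Finset.filter (fun i => f i < 0) s).card * (f a * ∏ i ∈ s, f i)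
          = f a * ((-1:ℝ) ^ (Finset.filter (fun i => f i < 0) s).card * ∏ i ∈ s, f i) := by
        ring
      rw [this]
      exact mul_pos hpos ih'

lemma card_filter_lt_fin (m j : ℕ) (hj : j ≤ m) :
    ((Finset.univ : Finset (Fin m)).filter (fun i : Fin m => (i:ℕ) < j)).card = j := by
  have : (Finset.univ : Finset (Fin m)).filter (fun i : Fin m => (i:ℕ) < j)
      = Finset.map (Fin.castLEEmb hj) Finset.univ := by
    ext x
    simp only [Finset.mem_filter, Finset.mem_univ, true_and, Finset.mem_map,
      Fin.castLEEmb_apply]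
    constructor
    · intro hx; exact ⟨⟨(x:ℕ), hx⟩, Fin.ext rfl⟩
    · rintro ⟨y, rfl⟩; simpa using y.isLt
  rw [this, Finset.card_map, Finset.card_univ, Fintype.card_fin]

/-- For a strictly antitone function, `{i | λ < f i}` is an initial segment. -/
lemma strictAnti_filter_segment {m : ℕ} {f : Fin m → ℝ} (hf : StrictAnti f) (lam : ℝ) :
    ∀ i : Fin m, lam < f i ↔
      (i:ℕ) < ((Finset.univ : Finset (Fin m)).filter (fun j : Fin m => lam < f j)).card := by
  classical
  set S := (Finset.univ : Finset (Fin m)).filter (fun j : Fin m => lam < f j) with hS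
  have hdc : ∀ i ∈ S, ∀ j : Fin m, j ≤ i → j ∈ S := by
    intro i hi j hji
    rw [hS, Finset.mem_filter] at *
    refine ⟨Finset.mem_univ _, lt_of_lt_of_le hi.2 (hf.antitone hji)⟩
  intro i
  constructor
  · intro hi
    have hsub : (Finset.univ : Finset (Fin m)).filter (fun j : Fin m => (j:ℕ) < (i:ℕ)+1) ⊆ S := by
      intro j hj
      rw [Finset.mem_filter] at hj
      exact hdc i (by rw [hS, Finset.mem_filter]; exact ⟨Finset.mem_univ _, hi⟩) j
        (by omega)
    have := Finset.card_le_card hsub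
    rw [card_filter_lt_fin m ((i:ℕ)+1) i.isLt] at this
    omega
  · intro hi
    by_contra hcon
    have hsub : S ⊆ (Finset.univ : Finset (Fin m)).filter (fun j : Fin m => (j:ℕ) < (i:ℕ)) := by
      intro j hj
      rw [Finset.mem_filter]
      refine ⟨Finset.mem_univ _, ?_⟩
      by_contra hji
      have hij : i ≤ j := Fin.le_def.mpr (by omega)
      have hiS : i ∈ S := hdc j hj i hij
      rw [hS, Finset.mem_filter] at hiS
      exact hcon hiS.2
    have := Finset.card_le_card hsub
    rw [card_filter_lt_fin m (i:ℕ) (le_of_lt i.isLt)] at this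
    omega

lemma root_in_Ioo {p : Polynomial ℝ} {a b : ℝ} (hab : a < b)
    (h : p.eval a * p.eval b < 0) : ∃ x, a < x ∧ x < b ∧ p.eval x = 0 := by
  have hc : ContinuousOn (fun x => p.eval x) (Set.Icc a b) := (p.continuous).continuousOn
  rcases lt_or_gt_of_ne (fun h0 : p.eval a = 0 => by rw [h0] at h; simp at h) with ha | ha
  · have hb : 0 < p.eval b := by nlinarith
    have := intermediate_value_Ioo hab.le hc (Set.mem_Ioo.mpr ⟨ha, hb⟩)
    obtain ⟨x, hx, hx0⟩ := this
    exact ⟨x, hx.1, hx.2, hx0⟩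
  · have hb : p.eval b < 0 := by nlinarith
    have := intermediate_value_Ioo' hab.le hc (Set.mem_Ioo.mpr ⟨hb, ha⟩)
    obtain ⟨x, hx, hx0⟩ := this
    exact ⟨x, hx.1, hx.2, hx0⟩

lemma exists_eval_pos_atTop (p : Polynomial ℝ) (hm : p.Monic) (hd : 0 < p.natDegree)
    (a : ℝ) : ∃ t, a < t ∧ 0 < p.eval t := by
  have hdeg : 0 < p.degree := natDegree_pos_iff_degree_pos.mp hd
  have := p.tendsto_atTop_of_leadingCoeff_nonneg hdeg (by rw [hm.leadingCoeff]; norm_num)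
  have h1 := this.eventually_gt_atTop (0:ℝ)
  have h2 := Filter.eventually_gt_atTop a
  obtain ⟨t, ht1, ht2⟩ := (h2.and h1).exists
  exact ⟨t, ht1, ht2⟩

lemma monic_factor_roots {p : Polynomial ℝ} (hp : p.Monic) {k : ℕ} (s : Fin k → ℝ)
    (hinj : Function.Injective s) (hroot : ∀ i, p.eval (s i) = 0) :
    ∃ g : Polynomial ℝ, p = (∏ i, (X - C (s i))) * g ∧ g.Monic ∧
      g.natDegree = p.natDegree - k := by
  classical
  have hpne : p ≠ 0 := hp.ne_zero
  set M : Multiset ℝ := Multiset.map s Finset.univ.val with hM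
  have hnd : M.Nodup := Multiset.Nodup.map hinj Finset.univ.nodup
  have hle : M ≤ p.roots := by
    rw [Multiset.le_iff_count]
    intro a
    by_cases ha : a ∈ M
    · have h1 : M.count a = 1 := Multiset.count_eq_one_of_mem hnd ha
      rw [h1]
      obtain ⟨i, -, rfl⟩ := Multiset.mem_map.mp ha
      have hmem : s i ∈ p.roots := by
        rw [Polynomial.mem_roots hpne]
        exact hroot i
      exact Nat.one_le_iff_ne_zero.mpr (by
        rw [Ne, Multiset.count_eq_zero]; exact fun hc => hc hmem)
    · rw [Multiset.count_eq_zero_of_notMem ha]; omega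
  have hdvd : (M.map (fun a => X - C a)).prod ∣ p :=
    dvd_trans (Multiset.prod_dvd_prod_of_le (Multiset.map_le_map hle))
      (prod_multiset_X_sub_C_dvd p)
  have hQ : (M.map fun a => X - C a).prod = ∏ i, (X - C (s i)) := by
    rw [hM, Multiset.map_map]
    rfl
  rw [hQ] at hdvd
  obtain ⟨g, hg⟩ := hdvd
  have hQm : (∏ i, (X - C (s i))).Monic :=
    monic_prod_of_monic _ _ (fun i _ => monic_X_sub_C (s i))
  have hgm : g.Monic := by
    have hmm : ((∏ i, (X - C (s i))) * g).Monic := by rw [← hg]; exact hp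
    exact hQm.of_mul_monic_left hmm
  refine ⟨g, hg, hgm, ?_⟩
  have hdeg : p.natDegree = k + g.natDegree := by
    rw [hg, Polynomial.natDegree_mul hQm.ne_zero hgm.ne_zero]
    congr 1
    rw [Polynomial.natDegree_prod _ _ (fun i _ => X_sub_C_ne_zero (s i))]
    simp
  omega

lemma prod_X_sub_C_inj {m : ℕ} {f g : Fin m → ℝ} (hf : StrictAnti f) (hg : StrictAnti g)
    (h : (∏ i, (X - C (f i))) = ∏ i, (X - C (g i))) : f = g := by
  classical
  have hroots : ∀ (u : Fin m → ℝ),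
      (∏ i, (X - C (u i))).roots = Multiset.map u Finset.univ.val := by
    intro u
    have heq : (∏ i, (X - C (u i)))
        = ((Multiset.map u Finset.univ.val).map (fun a => X - C a)).prod := by
      rw [Multiset.map_map]; rfl
    rw [heq, roots_multiset_prod_X_sub_C]
  have hmeq : Multiset.map f Finset.univ.val = Multiset.map g Finset.univ.val := by
    rw [← hroots f, ← hroots g, h]
  have hlist : ∀ (u : Fin m → ℝ), Multiset.map u Finset.univ.val = ↑(List.ofFn u) := by
    intro u
    rw [List.ofFn_eq_map]
    rfl
  rw [hlist f, hlist g, Multiset.coe_eq_coe] at hmeq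
  have hsf : List.Pairwise (· > ·) (List.ofFn f) :=
    List.pairwise_ofFn.mpr (fun i j hij => hf hij)
  have hsg : List.Pairwise (· > ·) (List.ofFn g) :=
    List.pairwise_ofFn.mpr (fun i j hij => hg hij)
  haveI : IsAntisymm ℝ (· > ·) := ⟨fun a b h1 h2 => absurd h2 (lt_asymm h1)⟩
  have := hmeq.eq_of_pairwise' hsf hsg
  exact List.ofFn_injective this

lemma strictAnti_of_adj {k : ℕ} {f : Fin k → ℝ}
    (h : ∀ (i : ℕ) (hi : i + 1 < k), f ⟨i+1, hi⟩ < f ⟨i, by omega⟩) : StrictAnti f := by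
  have key : ∀ (t i j : ℕ) (hj : j < k) (hij : j = i + t + 1),
      f ⟨j, hj⟩ < f ⟨i, by omega⟩ := by
    intro t
    induction t with
    | zero =>
      intro i j hj hij
      subst hij
      exact h i hj
    | succ t ih =>
      intro i j hj hij
      have h1 := ih (i+1) j hj (by omega)
      have h2 := h i (by omega)
      exact lt_trans h1 h2
  intro i j hij
  have hij' : (i:ℕ) < (j:ℕ) := hij
  have := key ((j:ℕ) - (i:ℕ) - 1) (i:ℕ) (j:ℕ) j.isLt (by omega)
  simpa using this

/-- two initial-segment characterizations give equal cardinals -/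
lemma seg_card_eq {M a b : ℕ} (P : Fin M → Prop) (ha : a ≤ M) (hb : b ≤ M)
    (hPa : ∀ i : Fin M, P i ↔ (i:ℕ) < a) (hPb : ∀ i : Fin M, P i ↔ (i:ℕ) < b) : a = b := by
  by_contra hne
  rcases Nat.lt_or_ge a b with h | h
  · have h1 : P ⟨a, by omega⟩ := (hPb _).mpr (by simpa using h)
    have h2 := (hPa _).mp h1
    simp at h2
  · have hba : b < a := by omega
    have h1 : P ⟨b, by omega⟩ := (hPa _).mpr (by simpa using hba)
    have h2 := (hPb _).mp h1
    simp at h2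


lemma countSignChanges_singleton (a : ℝ) : countSignChanges [a] = 0 := by
  simp [countSignChanges]

lemma countSignChanges_cons_cons (a b : ℝ) (t : List ℝ) :
    countSignChanges (a :: b :: t) =
      (if a * b < 0 then 1 else 0) + countSignChanges (b :: t) := by
  simp only [countSignChanges, List.tail_cons, List.zip_cons_cons, List.filter_cons]
  by_cases h : a * b < 0 <;> simp [h, add_comm]

lemma sgn_opp {c a b : ℝ} (ha : 0 < c * a) (hb : 0 < -(c * b)) : a * b < 0 := by
  nlinarith [mul_pos ha hb, sq_nonneg c]

lemma sgn_same {c a b : ℝ} (ha : 0 < c * a) (hb : 0 < c * b) : 0 < a * b := by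
  nlinarith [mul_pos ha hb, sq_nonneg c, sq_nonneg (a*b)]

def SRel : (ℝ × ℕ) → (ℝ × ℕ) → Prop := fun p q =>
  (q.2 = p.2 ∨ q.2 = p.2 + 1) ∧ (p.1 = 0 → q.1 ≠ 0 ∧ q.2 = p.2 + 1) ∧ (q.1 = 0 → q.2 = p.2)

def CompRelR : ℝ → ℝ → Prop := fun a b => (a ≠ 0 ∧ b = a) ∨ (a = 0 ∧ (b = 1 ∨ b = -1))

lemma master (σ : ℝ) : ∀ (N : ℕ) (lp : List (ℝ × ℕ)) (p : ℝ × ℕ), lp.length ≤ N →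
    (∀ q ∈ p :: lp, q.1 ≠ 0 → 0 < σ * (-1:ℝ)^q.2 * q.1) →
    List.Chain' SRel (p :: lp) → p.1 ≠ 0 →
    ((p :: lp).getLast (by simp)).1 ≠ 0 →
    (countSignChanges (((p :: lp).map Prod.fst).filter (fun x => decide (x ≠ 0))) + p.2
       = ((p :: lp).getLast (by simp)).2)
    ∧ ∀ l', List.Forall₂ CompRelR ((p :: lp).map Prod.fst) l' →
        countSignChanges l' + p.2 = ((p :: lp).getLast (by simp)).2 := by
  intro N
  induction N with
  | zero =>
    intro lp p hlen hE hch hp hz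
    have hnil : lp = [] := List.length_eq_zero_iff.mp (Nat.le_zero.mp hlen)
    subst hnil
    refine ⟨?_, ?_⟩
    · simp [hp, countSignChanges_singleton, List.getLast]
    · rintro l' hf
      rcases hf with _ | ⟨hr, hnil'⟩
      rcases hnil' with _ | _
      simp [countSignChanges_singleton, List.getLast]
  | succ N ih =>
    intro lp p hlen hE hch hp hz
    match lp with
    | [] =>
      refine ⟨?_, ?_⟩
      · simp [hp, countSignChanges_singleton, List.getLast]
      · rintro l' hf
        rcases hf with _ | ⟨hr, hnil'⟩
        rcases hnil' with _ | _
        simp [countSignChanges_singleton, List.getLast]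
    | q :: rest =>
      simp only [List.Chain', List.isChain_cons_cons] at hch
      obtain ⟨hpq, hch'⟩ := hch
      have hlastcons : ((p :: q :: rest).getLast (by simp)) =
          ((q :: rest).getLast (by simp)) := List.getLast_cons (by simp)
      by_cases hq : q.1 = 0
      · -- zero case: need rest = r :: rest'
        match rest with
        | [] =>
          exfalso; rw [hlastcons] at hz; simp [List.getLast] at hz; exact hz hq
        | r :: rest' =>
          simp only [List.Chain', List.isChain_cons_cons] at hch'
          obtain ⟨hqr, hch''⟩ := hch'
          have hr : r.1 ≠ 0 := (hqr.2.1 hq).1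
          have hr2 : r.2 = q.2 + 1 := (hqr.2.1 hq).2
          have hq2 : q.2 = p.2 := hpq.2.2 hq
          have hlast2 : ((q :: r :: rest').getLast (by simp)) =
              ((r :: rest').getLast (by simp)) := List.getLast_cons (by simp)
          have hzr : ((r :: rest').getLast (by simp)).1 ≠ 0 := by
            rw [hlastcons, hlast2] at hz; exact hz
          have hlen' : rest'.length ≤ N := by simp at hlen; omega
          have hE' : ∀ x ∈ r :: rest', x.1 ≠ 0 → 0 < σ * (-1:ℝ)^x.2 * x.1 := by
            intro x hx; exact hE x (List.mem_cons_of_mem _ (List.mem_cons_of_mem _ hx))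
          obtain ⟨IH1, IH2⟩ := ih rest' r hlen' hE' hch'' hr hzr
          -- sign of p.1 * r.1 : opposite
          have hsp : 0 < σ * (-1:ℝ)^p.2 * p.1 := hE p (by simp) hp
          have hsr : 0 < σ * (-1:ℝ)^r.2 * r.1 := hE r (by simp) hr
          have hpr : p.1 * r.1 < 0 := by
            apply sgn_opp (c := σ * (-1:ℝ)^p.2)
            · exact hsp
            · have : σ * (-1:ℝ)^r.2 = -(σ * (-1:ℝ)^p.2) := by
                rw [hr2, hq2, pow_succ]; ring
              rw [this] at hsr; linarith [hsr]
          refine ⟨?_, ?_⟩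
          · -- filtered count
            have hfil : (((p :: q :: r :: rest').map Prod.fst).filter
                (fun x => decide (x ≠ 0))) = p.1 :: (((r :: rest').map Prod.fst).filter
                (fun x => decide (x ≠ 0))) := by
              simp only [List.map_cons, List.filter_cons]
              simp [hp, hq, hr]
            rw [hfil]
            have hfil2 : (((r :: rest').map Prod.fst).filter (fun x => decide (x ≠ 0)))
                = r.1 :: ((rest'.map Prod.fst).filter (fun x => decide (x ≠ 0))) := by
              simp only [List.map_cons, List.filter_cons]; simp [hr]
            rw [hfil2, countSignChanges_cons_cons, ← hfil2]
            rw [hlastcons, hlast2]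
            rw [if_pos hpr]
            omega
          · rintro l' hf
            rcases hf with _ | ⟨hb, hf⟩
            rename_i b l₂
            rcases hf with _ | ⟨he, hf⟩
            rename_i e l₃
            rcases hf with _ | ⟨hc, hf⟩
            rename_i c l₄
            -- b = p.1, e = ±1, c = r.1
            have hb' : b = p.1 := by rcases hb with ⟨_, h⟩ | ⟨h, _⟩; exact h; exact absurd h hp
            have he' : e ≠ 0 := by
              rcases he with ⟨h, h2⟩ | ⟨_, h2 | h2⟩ <;> rw [h2] <;> first | exact h | norm_num
            have hc' : c = r.1 := by rcases hc with ⟨_, h⟩ | ⟨h, _⟩; exact h; exact absurd h hr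
            have hIH := IH2 (c :: l₄) (List.Forall₂.cons hc hf)
            rw [countSignChanges_cons_cons, countSignChanges_cons_cons]
            rw [hlastcons, hlast2] at *
            subst hb' hc'
            -- exactly one of p.1*e<0, e*r.1<0
            have hprod : (p.1 * e) * (e * r.1) < 0 := by nlinarith [sq_nonneg e, mul_self_pos.mpr he']
            by_cases h1 : p.1 * e < 0
            · have h2 : ¬ (e * r.1 < 0) := by nlinarith
              rw [if_pos h1, if_neg h2]; omega
            · have h2 : e * r.1 < 0 := by nlinarith [lt_or_ge (p.1*e) 0]
              rw [if_neg h1, if_pos h2]; omega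
      · -- q.1 ≠ 0
        have hlen' : rest.length ≤ N := by simp at hlen; omega
        have hE' : ∀ x ∈ q :: rest, x.1 ≠ 0 → 0 < σ * (-1:ℝ)^x.2 * x.1 := by
          intro x hx; exact hE x (List.mem_cons_of_mem _ hx)
        have hzq : ((q :: rest).getLast (by simp)).1 ≠ 0 := by rw [hlastcons] at hz; exact hz
        obtain ⟨IH1, IH2⟩ := ih rest q hlen' hE' hch' hq hzq
        have hsp : 0 < σ * (-1:ℝ)^p.2 * p.1 := hE p (by simp) hp
        have hsq : 0 < σ * (-1:ℝ)^q.2 * q.1 := hE q (by simp) hq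
        have hind : (if p.1 * q.1 < 0 then 1 else 0) + p.2 = q.2 := by
          rcases hpq.1 with h | h
          · have : 0 < p.1 * q.1 := by
              apply sgn_same (c := σ * (-1:ℝ)^p.2) hsp; rw [h] at hsq; exact hsq
            rw [if_neg (by linarith)]; omega
          · have : p.1 * q.1 < 0 := by
              apply sgn_opp (c := σ * (-1:ℝ)^p.2) hsp
              have : σ * (-1:ℝ)^q.2 = -(σ * (-1:ℝ)^p.2) := by rw [h, pow_succ]; ring
              rw [this] at hsq; linarith
            rw [if_pos this]; omega
        refine ⟨?_, ?_⟩
        · have hfil : (((p :: q :: rest).map Prod.fst).filter (fun x => decide (x ≠ 0)))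
              = p.1 :: (((q :: rest).map Prod.fst).filter (fun x => decide (x ≠ 0))) := by
            simp only [List.map_cons, List.filter_cons]; simp [hp]
          have hfil2 : (((q :: rest).map Prod.fst).filter (fun x => decide (x ≠ 0)))
              = q.1 :: ((rest.map Prod.fst).filter (fun x => decide (x ≠ 0))) := by
            simp only [List.map_cons, List.filter_cons]; simp [hq]
          rw [hfil, hfil2, countSignChanges_cons_cons, ← hfil2, hlastcons]
          omega
        · rintro l' hf
          rcases hf with _ | ⟨hb, hf⟩
          rename_i b l₂
          rcases hf with _ | ⟨hc, hf2⟩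
          rename_i c l₃
          have hb' : b = p.1 := by rcases hb with ⟨_, h⟩ | ⟨h, _⟩; exact h; exact absurd h hp
          have hc' : c = q.1 := by rcases hc with ⟨_, h⟩ | ⟨h, _⟩; exact h; exact absurd h hq
          have hIH := IH2 (c :: l₃) (List.Forall₂.cons hc hf2)
          rw [countSignChanges_cons_cons, hlastcons]
          subst hb' hc'
          omega


section tri
variable {n : ℕ} (J : Matrix (Fin n) (Fin n) ℝ)

noncomputable def bbJ (i : ℕ) : ℝ := if h : i < n then J ⟨i, h⟩ ⟨i, h⟩ else 0
noncomputable def ccJ (i : ℕ) : ℝ :=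
  if h : i + 1 < n then J ⟨i, by omega⟩ ⟨i+1, h⟩ else 1
noncomputable def aaJ (i : ℕ) : ℝ :=
  if h : i + 1 < n then J ⟨i+1, h⟩ ⟨i, by omega⟩ else 1

lemma ccJ_pos (hJ : MemMplus J) (i : ℕ) : 0 < ccJ J i := by
  rw [ccJ]; split_ifs with h
  · exact hJ.2 _ _ (Or.inl rfl)
  · norm_num

lemma aaJ_pos (hJ : MemMplus J) (i : ℕ) : 0 < aaJ J i := by
  rw [aaJ]; split_ifs with h
  · exact hJ.2 _ _ (Or.inr rfl)
  · norm_num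

/-- the charmatrix-shaped tridiagonal polynomial matrix of size m -/
noncomputable def CMJ (m : ℕ) : Matrix (Fin m) (Fin m) (Polynomial ℝ) :=
  Matrix.of fun i j =>
    if (i : ℕ) = (j : ℕ) then X - C (bbJ J i) else
    if (i : ℕ) + 1 = (j : ℕ) then - C (ccJ J i) else
    if (j : ℕ) + 1 = (i : ℕ) then - C (aaJ J j) else 0

lemma CMJ_apply (m : ℕ) (i j : Fin m) : CMJ J m i j =
    (if (i : ℕ) = (j : ℕ) then X - C (bbJ J i) else
    if (i : ℕ) + 1 = (j : ℕ) then - C (ccJ J i) else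
    if (j : ℕ) + 1 = (i : ℕ) then - C (aaJ J j) else 0) := rfl

noncomputable def chiJ (m : ℕ) : Polynomial ℝ := (CMJ J m).det

lemma chiJ_zero : chiJ J 0 = 1 := by
  simp [chiJ, Matrix.det_isEmpty]

lemma chiJ_one : chiJ J 1 = X - C (bbJ J 0) := by
  simp [chiJ, Matrix.det_fin_one, CMJ]

lemma CMJ_submatrix (m k : ℕ) (f g : Fin m → Fin k)
    (hf : ∀ i, (f i : ℕ) = (i : ℕ)) (hg : ∀ j, (g j : ℕ) = (j : ℕ)) :
    (CMJ J k).submatrix f g = CMJ J m := by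
  ext i j
  simp only [Matrix.submatrix_apply, CMJ, Matrix.of_apply, hf, hg]

lemma chiJ_monic (m : ℕ) : (chiJ J m).Monic ∧ (chiJ J m).natDegree = m := by
  have h : CMJ J m = charmatrix (Matrix.of fun i j : Fin m =>
      if (i : ℕ) = (j : ℕ) then bbJ J i else
      if (i : ℕ) + 1 = (j : ℕ) then ccJ J i else
      if (j : ℕ) + 1 = (i : ℕ) then aaJ J j else 0) := by
    ext i j
    by_cases hij : (i : ℕ) = (j : ℕ)
    · have : i = j := Fin.ext hij
      subst this
      simp [CMJ, charmatrix_apply, Matrix.diagonal_apply_eq]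
    · have hne : i ≠ j := fun h => hij (by rw [h])
      simp only [CMJ, Matrix.of_apply, charmatrix_apply, Matrix.diagonal_apply_ne _ hne,
        if_neg hij]
      split_ifs <;> simp
  rw [chiJ, h]
  refine ⟨Matrix.charpoly_monic _, ?_⟩
  rw [show (charmatrix _).det = Matrix.charpoly _ from rfl, Matrix.charpoly_natDegree_eq_dim]
  exact Fintype.card_fin m

lemma chiJ_rec (m : ℕ) :
    chiJ J (m+2) = (X - C (bbJ J (m+1))) * chiJ J (m+1)
      - C (aaJ J m * ccJ J m) * chiJ J m := by
  rw [chiJ, Matrix.det_succ_row _ (Fin.last (m+1))]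
  rw [Fin.sum_univ_castSucc, Fin.sum_univ_castSucc]
  have hz : ∀ j : Fin m,
      (-1 : Polynomial ℝ) ^ (((Fin.last (m+1)) : ℕ) + ((j.castSucc.castSucc : Fin (m+2)) : ℕ)) *
        (CMJ J (m+2)) (Fin.last (m+1)) j.castSucc.castSucc *
        ((CMJ J (m+2)).submatrix (Fin.last (m+1)).succAbove
          (j.castSucc.castSucc).succAbove).det = 0 := by
    intro j
    have he : (CMJ J (m+2)) (Fin.last (m+1)) j.castSucc.castSucc = 0 := by
      have hj : (j : ℕ) < m := j.isLt
      rw [CMJ_apply]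
      have h1 : ((Fin.last (m+1) : Fin (m+2)) : ℕ) = m+1 := rfl
      have h2 : ((j.castSucc.castSucc : Fin (m+2)) : ℕ) = (j : ℕ) := rfl
      rw [h1, h2]
      split_ifs <;> first | omega | rfl
    rw [he]; ring
  rw [Finset.sum_eq_zero (fun j _ => hz j), zero_add]
  -- the j = last term
  have hterm2 : (CMJ J (m+2)) (Fin.last (m+1)) (Fin.last (m+1)) = X - C (bbJ J (m+1)) := by
    rw [CMJ_apply]; norm_num
  have hsub2 : ((CMJ J (m+2)).submatrix (Fin.last (m+1)).succAbove
      (Fin.last (m+1)).succAbove).det = chiJ J (m+1) := by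
    rw [Fin.succAbove_last,
      CMJ_submatrix J (m+1) (m+2) Fin.castSucc Fin.castSucc (fun i => rfl) (fun j => rfl)]
    rfl
  -- the j = penultimate term
  set g := ((Fin.last m).castSucc : Fin (m+2)).succAbove with hgdef
  have hterm1 : (CMJ J (m+2)) (Fin.last (m+1)) ((Fin.last m).castSucc)
      = - C (aaJ J m) := by
    rw [CMJ_apply]
    have h1 : ((Fin.last (m+1) : Fin (m+2)) : ℕ) = m+1 := rfl
    have h2 : (((Fin.last m).castSucc : Fin (m+2)) : ℕ) = m := rfl
    rw [h1, h2]
    split_ifs <;> first | omega | rfl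
  have hg1 : g (Fin.last m) = Fin.last (m+1) := by
    apply Fin.ext
    simp [hgdef, Fin.succAbove, Fin.lt_def]
  have hg2 : ∀ j : Fin m, g j.castSucc = j.castSucc.castSucc := by
    intro j
    apply Fin.ext
    have hj : (j : ℕ) < m := j.isLt
    simp only [hgdef, Fin.succAbove, Fin.lt_def, Fin.coe_castSucc, Fin.val_last]
    rw [if_pos (by simp)]; simp
  set B := (CMJ J (m+2)).submatrix (Fin.last (m+1)).succAbove g with hBdef
  have hBdet : B.det = - (C (ccJ J m) * chiJ J m) := by
    rw [hBdef, Fin.succAbove_last, Matrix.det_succ_column _ (Fin.last m)]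
    rw [Fin.sum_univ_castSucc]
    have hz2 : ∀ i : Fin m,
        (-1 : Polynomial ℝ) ^ (((i.castSucc : Fin (m+1)) : ℕ) + ((Fin.last m : Fin (m+1)) : ℕ)) *
          ((CMJ J (m+2)).submatrix Fin.castSucc g) i.castSucc (Fin.last m) *
          (((CMJ J (m+2)).submatrix Fin.castSucc g).submatrix i.castSucc.succAbove
            (Fin.last m).succAbove).det = 0 := by
      intro i
      have he : ((CMJ J (m+2)).submatrix Fin.castSucc g) i.castSucc (Fin.last m) = 0 := by
        rw [Matrix.submatrix_apply, hg1, CMJ_apply]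
        have h1 : ((i.castSucc.castSucc : Fin (m+2)) : ℕ) = (i : ℕ) := rfl
        have h2 : ((Fin.last (m+1) : Fin (m+2)) : ℕ) = m + 1 := rfl
        rw [h1, h2]
        have hi : (i : ℕ) < m := i.isLt
        split_ifs <;> first | omega | rfl
      rw [he]; ring
    rw [Finset.sum_eq_zero (fun i _ => hz2 i), zero_add]
    have he2 : ((CMJ J (m+2)).submatrix Fin.castSucc g) (Fin.last m) (Fin.last m)
        = - C (ccJ J m) := by
      rw [Matrix.submatrix_apply, hg1, CMJ_apply]
      have h1 : (((Fin.last m).castSucc : Fin (m+2)) : ℕ) = m := rfl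
      have h2 : ((Fin.last (m+1) : Fin (m+2)) : ℕ) = m + 1 := rfl
      rw [h1, h2]
      split_ifs <;> first | omega | rfl
    have hsub : (((CMJ J (m+2)).submatrix Fin.castSucc g).submatrix (Fin.last m).succAbove
        (Fin.last m).succAbove).det = chiJ J m := by
      rw [Fin.succAbove_last, Matrix.submatrix_submatrix]
      rw [show (Fin.castSucc ∘ Fin.castSucc : Fin m → Fin (m+2)) = fun i => i.castSucc.castSucc
        from rfl]
      rw [show (g ∘ Fin.castSucc : Fin m → Fin (m+2)) = fun i => i.castSucc.castSucc by
        funext i; exact hg2 i]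
      rw [CMJ_submatrix J m (m+2) _ _ (fun i => rfl) (fun j => rfl)]
      rfl
    rw [he2, hsub]
    have : ((Fin.last m : Fin (m+1)) : ℕ) = m := rfl
    rw [this]
    have hpow : (-1 : Polynomial ℝ) ^ (m + m) = 1 := Even.neg_one_pow ⟨m, rfl⟩
    rw [hpow]; ring
  rw [hterm1, hterm2, hsub2, hBdet]
  have h1 : ((Fin.last (m+1) : Fin (m+2)) : ℕ) = m+1 := rfl
  have h2 : (((Fin.last m).castSucc : Fin (m+2)) : ℕ) = m := rfl
  rw [h1, h2]
  have hpow1 : (-1 : Polynomial ℝ) ^ (m + 1 + (m+1)) = 1 := Even.neg_one_pow ⟨m+1, rfl⟩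
  have hpow2 : (-1 : Polynomial ℝ) ^ (m + 1 + m) = -1 := Odd.neg_one_pow ⟨m, by ring⟩
  rw [hpow1, hpow2, _root_.map_mul (C : ℝ →+* Polynomial ℝ)]
  ring
end tri


section interlace
variable {n : ℕ} (J : Matrix (Fin n) (Fin n) ℝ)

def GoodPair (m : ℕ) (r : Fin m → ℝ) (r' : Fin (m+1) → ℝ) : Prop :=
  StrictAnti r ∧ StrictAnti r' ∧
  chiJ J m = ∏ i, (X - C (r i)) ∧ chiJ J (m+1) = ∏ i, (X - C (r' i)) ∧
  ∀ i : Fin m, r i < r' i.castSucc ∧ r' i.succ < r i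

lemma goodpair_factor_lt {m : ℕ} {r : Fin m → ℝ} {r' : Fin (m+1) → ℝ}
    (h : GoodPair J m r r') (i : Fin (m+1)) (j : Fin m) :
    ((j:ℕ) < (i:ℕ) → r' i - r j < 0) ∧ ((i:ℕ) ≤ (j:ℕ) → 0 < r' i - r j) := by
  obtain ⟨har, har', hcm, hcm', hint⟩ := h
  constructor
  · intro hlt
    have h1 : r' j.succ < r j := (hint j).2
    have h2 : r' i ≤ r' j.succ := har'.antitone (by rw [Fin.le_def]; simp; omega)
    linarith
  · intro hge
    have h1 : r j < r' j.castSucc := (hint j).1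
    have h2 : r' j.castSucc ≤ r' i := har'.antitone (by rw [Fin.le_def]; simp; omega)
    linarith

lemma goodpair_eval_sign {m : ℕ} {r : Fin m → ℝ} {r' : Fin (m+1) → ℝ}
    (h : GoodPair J m r r') (i : Fin (m+1)) :
    0 < (-1:ℝ)^(i:ℕ) * (chiJ J m).eval (r' i) := by
  classical
  have hfac := goodpair_factor_lt J h i
  obtain ⟨har, har', hcm, hcm', hint⟩ := h
  rw [hcm, eval_prod]
  simp only [eval_sub, eval_X, eval_C]
  have hne : ∀ j ∈ (Finset.univ : Finset (Fin m)), r' i - r j ≠ 0 := by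
    intro j _
    rcases Nat.lt_or_ge (j:ℕ) (i:ℕ) with hlt | hge
    · exact ne_of_lt ((hfac j).1 hlt)
    · exact ne_of_gt ((hfac j).2 hge)
  have hcard : ((Finset.univ : Finset (Fin m)).filter (fun j => r' i - r j < 0)).card
      = (i:ℕ) := by
    have hset : (Finset.univ : Finset (Fin m)).filter (fun j => r' i - r j < 0)
        = (Finset.univ : Finset (Fin m)).filter (fun j : Fin m => (j:ℕ) < (i:ℕ)) := by
      apply Finset.filter_congr
      intro j _
      constructor
      · intro hneg
        by_contra hge
        have := (hfac j).2 (by omega)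
        linarith
      · exact (hfac j).1
    rw [hset, card_filter_lt_fin m (i:ℕ) (by omega)]
  have := prod_sign_finset Finset.univ (fun j => r' i - r j) hne
  rw [hcard] at this
  exact this

lemma goodpair_root' {m : ℕ} {r : Fin m → ℝ} {r' : Fin (m+1) → ℝ}
    (h : GoodPair J m r r') (i : Fin (m+1)) : (chiJ J (m+1)).eval (r' i) = 0 := by
  rw [h.2.2.2.1, eval_prod]
  apply Finset.prod_eq_zero (Finset.mem_univ i)
  simp

lemma goodpair_step (hJ : MemMplus J) {m : ℕ} {r : Fin m → ℝ} {r' : Fin (m+1) → ℝ}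
    (h : GoodPair J m r r') : ∃ r'' : Fin (m+2) → ℝ, GoodPair J (m+1) r' r'' := by
  classical
  have hpm := chiJ_monic J (m+2)
  have hrec := chiJ_rec J m
  have hac : 0 < aaJ J m * ccJ J m := mul_pos (aaJ_pos J hJ m) (ccJ_pos J hJ m)
  have har' : StrictAnti r' := h.2.1
  have hpeval : ∀ i : Fin (m+1), (chiJ J (m+2)).eval (r' i)
      = -(aaJ J m * ccJ J m) * (chiJ J m).eval (r' i) := by
    intro i
    rw [hrec]
    simp only [eval_sub, eval_mul, eval_add, eval_X, eval_C, goodpair_root' J h i]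
    ring
  have hsign : ∀ i : Fin (m+1), 0 < (-1:ℝ)^((i:ℕ)+1) * (chiJ J (m+2)).eval (r' i) := by
    intro i
    rw [hpeval i]
    have h1 := goodpair_eval_sign J h i
    have h2 : (-1:ℝ)^((i:ℕ)+1) * (-(aaJ J m * ccJ J m) * (chiJ J m).eval (r' i))
        = (aaJ J m * ccJ J m) * ((-1:ℝ)^(i:ℕ) * (chiJ J m).eval (r' i)) := by
      rw [pow_succ]; ring
    rw [h2]
    exact mul_pos hac h1
  -- top root
  obtain ⟨t, ht1, ht2⟩ := exists_eval_pos_atTop (chiJ J (m+2)) hpm.1 (by omega) (r' 0)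
  have h0neg : (chiJ J (m+2)).eval (r' 0) < 0 := by
    have := hsign 0
    simp only [Fin.val_zero, zero_add, pow_one] at this
    linarith
  obtain ⟨s0, hs0a, hs0b, hs0root⟩ := root_in_Ioo ht1
    (mul_neg_of_neg_of_pos h0neg ht2)
  -- gap roots
  have hgap : ∀ i : Fin m, ∃ x, r' i.succ < x ∧ x < r' i.castSucc ∧
      (chiJ J (m+2)).eval x = 0 := by
    intro i
    apply root_in_Ioo (har' (Fin.castSucc_lt_succ (i := i)))
    have h1 := hsign i.succ
    have h2 := hsign i.castSucc
    rw [Fin.val_succ] at h1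
    rw [Fin.coe_castSucc] at h2
    have hodd : (-1:ℝ)^((i:ℕ)+1+1) * (-1:ℝ)^((i:ℕ)+1) = -1 :=
      (pow_add (-1:ℝ) _ _).symm.trans (Odd.neg_one_pow ⟨(i:ℕ)+1, by ring⟩)
    have hm := mul_pos h1 h2
    have hre : ((-1:ℝ)^((i:ℕ)+1+1) * (chiJ J (m+2)).eval (r' i.succ)) *
        ((-1:ℝ)^((i:ℕ)+1) * (chiJ J (m+2)).eval (r' i.castSucc))
        = ((-1:ℝ)^((i:ℕ)+1+1) * (-1:ℝ)^((i:ℕ)+1)) *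
          ((chiJ J (m+2)).eval (r' i.succ) * (chiJ J (m+2)).eval (r' i.castSucc)) := by
      ring
    rw [hre, hodd] at hm
    linarith
  choose xg hxg1 hxg2 hxg3 using hgap
  set s : Fin (m+1) → ℝ := Fin.cases s0 xg with hs
  have hs0 : s 0 = s0 := rfl
  have hssucc : ∀ i : Fin m, s i.succ = xg i := fun i => by simp [hs]
  have hsroot : ∀ i, (chiJ J (m+2)).eval (s i) = 0 := by
    intro i
    induction i using Fin.cases with
    | zero => rw [hs0]; exact hs0root
    | succ i => rw [hssucc]; exact hxg3 i
  have hsgt : ∀ i : Fin (m+1), r' i < s i := by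
    intro i
    induction i using Fin.cases with
    | zero => rw [hs0]; exact hs0a
    | succ i => rw [hssucc]; exact hxg1 i
  have hslt : ∀ i : Fin m, s i.succ < r' i.castSucc := by
    intro i; rw [hssucc]; exact hxg2 i
  have hsanti : StrictAnti s := by
    apply strictAnti_of_adj
    intro i hi
    have hj : i < m := by omega
    have e1 : (⟨i+1, hi⟩ : Fin (m+1)) = (⟨i, hj⟩ : Fin m).succ := by
      apply Fin.ext; simp
    have e2 : (⟨i, by omega⟩ : Fin (m+1)) = (⟨i, hj⟩ : Fin m).castSucc := by
      apply Fin.ext; simp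
    rw [e1, e2]
    exact lt_trans (hslt ⟨i, hj⟩) (hsgt (⟨i, hj⟩ : Fin m).castSucc)
  obtain ⟨g, hpg, hgm, hgd⟩ := monic_factor_roots hpm.1 s hsanti.injective hsroot
  have hgd1 : g.natDegree = 1 := by rw [hgd, hpm.2]; omega
  have hc1 : g.coeff 1 = 1 := by
    have := hgm.coeff_natDegree
    rwa [hgd1] at this
  set c0 : ℝ := -(g.coeff 0) with hc0def
  have hgX : g = X - C c0 := by
    have h1 := eq_X_add_C_of_natDegree_le_one (le_of_eq hgd1)
    rw [hc1, Polynomial.C_1, one_mul] at h1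
    rw [h1, hc0def, Polynomial.C_neg]
    ring
  -- c0 below the smallest root of chi (m+1)
  have hlastval : ((Fin.last m : Fin (m+1)) : ℕ) = m := rfl
  have hQlast : 0 < (-1:ℝ)^(m+1) * ∏ i, (r' (Fin.last m) - s i) := by
    have hne : ∀ i ∈ (Finset.univ : Finset (Fin (m+1))), r' (Fin.last m) - s i ≠ 0 := by
      intro i _
      have h1 : r' (Fin.last m) ≤ r' i := har'.antitone (Fin.le_last i)
      have h2 := hsgt i
      linarith
    have hflt : (Finset.univ : Finset (Fin (m+1))).filter
        (fun i => r' (Fin.last m) - s i < 0) = Finset.univ := by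
      apply Finset.filter_true_of_mem
      intro i _
      have h1 : r' (Fin.last m) ≤ r' i := har'.antitone (Fin.le_last i)
      have h2 := hsgt i
      linarith
    have := prod_sign_finset Finset.univ (fun i => r' (Fin.last m) - s i) hne
    rwa [hflt, Finset.card_univ, Fintype.card_fin] at this
  have hplast : 0 < (-1:ℝ)^(m+1) * (chiJ J (m+2)).eval (r' (Fin.last m)) := by
    have := hsign (Fin.last m)
    rwa [hlastval] at this
  have hevalQ : (chiJ J (m+2)).eval (r' (Fin.last m))
      = (∏ i, (r' (Fin.last m) - s i)) * (r' (Fin.last m) - c0) := by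
    rw [hpg, hgX, eval_mul, eval_prod]
    simp
  have hc0lt : c0 < r' (Fin.last m) := by
    by_contra hle
    push_neg at hle
    rw [hevalQ] at hplast
    have : (-1:ℝ)^(m+1) * ((∏ i, (r' (Fin.last m) - s i)) * (r' (Fin.last m) - c0))
        = ((-1:ℝ)^(m+1) * ∏ i, (r' (Fin.last m) - s i)) * (r' (Fin.last m) - c0) := by ring
    rw [this] at hplast
    nlinarith
  -- assemble
  refine ⟨Fin.snoc s c0, har', ?_, h.2.2.2.1, ?_, ?_⟩
  · -- StrictAnti (snoc s c0)
    apply strictAnti_of_adj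
    intro i hi
    by_cases him : i + 1 < m + 1
    · have e1 : (⟨i+1, hi⟩ : Fin (m+2)) = (⟨i+1, him⟩ : Fin (m+1)).castSucc := by
        apply Fin.ext; simp
      have e2 : (⟨i, by omega⟩ : Fin (m+2)) = (⟨i, by omega⟩ : Fin (m+1)).castSucc := by
        apply Fin.ext; simp
      rw [e1, e2, Fin.snoc_castSucc, Fin.snoc_castSucc]
      exact hsanti (by rw [Fin.lt_def]; simp)
    · have him' : i = m := by omega
      have e1 : (⟨i+1, hi⟩ : Fin (m+2)) = Fin.last (m+1) := by
        apply Fin.ext; simp [him']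
      have e2 : (⟨i, by omega⟩ : Fin (m+2)) = (Fin.last m).castSucc := by
        apply Fin.ext; simp [him']
      rw [e1, e2, Fin.snoc_castSucc, Fin.snoc_last]
      exact lt_trans hc0lt (hsgt (Fin.last m))
  · -- factorization of chi (m+2)
    rw [hpg, hgX]
    conv_rhs => rw [Fin.prod_univ_castSucc]
    simp only [Fin.snoc_castSucc, Fin.snoc_last]
  · -- interlacing
    intro i
    constructor
    · rw [Fin.snoc_castSucc]
      exact hsgt i
    · by_cases him : (i:ℕ) < m
      · have e1 : (i.succ : Fin (m+2)) = ((⟨(i:ℕ), him⟩ : Fin m).succ : Fin (m+1)).castSucc := by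
          apply Fin.ext; simp
        rw [e1, Fin.snoc_castSucc]
        have := hslt ⟨(i:ℕ), him⟩
        have e2 : ((⟨(i:ℕ), him⟩ : Fin m).castSucc : Fin (m+1)) = i := by
          apply Fin.ext; simp
        rwa [e2] at this
      · have him' : (i:ℕ) = m := by omega
        have e1 : (i.succ : Fin (m+2)) = Fin.last (m+1) := by apply Fin.ext; simp [him']
        have e2 : i = Fin.last m := by apply Fin.ext; simp [him']
        rw [e1, Fin.snoc_last, e2]
        exact hc0lt

lemma goodpair_base : ∃ r' : Fin 1 → ℝ, GoodPair J 0 (fun i => i.elim0) r' := by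
  refine ⟨fun _ => bbJ J 0, ?_, ?_, ?_, ?_, ?_⟩
  · intro a b hab; exact absurd hab (by exact fun h => a.elim0)
  · intro a b hab
    have : a = b := Fin.ext (by omega)
    exact absurd hab (by rw [this]; exact lt_irrefl b)
  · rw [chiJ_zero]
    simp [Finset.univ_eq_empty]
  · rw [chiJ_one]
    rw [Fin.prod_univ_one]
  · intro i; exact i.elim0

lemma exists_goodpair (hJ : MemMplus J) :
    ∀ m : ℕ, ∃ (r : Fin m → ℝ) (r' : Fin (m+1) → ℝ), GoodPair J m r r' := by
  intro m
  induction m with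
  | zero =>
    obtain ⟨r', h⟩ := goodpair_base J
    exact ⟨_, r', h⟩
  | succ m ih =>
    obtain ⟨r, r', h⟩ := ih
    obtain ⟨r'', h'⟩ := goodpair_step J hJ h
    exact ⟨r', r'', h'⟩

end interlace

section assembly
variable {n : ℕ} (J : Matrix (Fin n) (Fin n) ℝ)

lemma bbJ_eq (i : Fin n) : bbJ J (i:ℕ) = J i i := by
  rcases i with ⟨iv, hi⟩
  rw [bbJ, dif_pos hi]

lemma ccJ_eq (i j : Fin n) (h : (i:ℕ)+1 = (j:ℕ)) : ccJ J (i:ℕ) = J i j := by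
  rcases i with ⟨iv, hi⟩
  rcases j with ⟨jv, hj⟩
  simp only [Fin.val_mk] at h ⊢
  subst h
  rw [ccJ, dif_pos hj]

lemma aaJ_eq (i j : Fin n) (h : (j:ℕ)+1 = (i:ℕ)) : aaJ J (j:ℕ) = J i j := by
  rcases i with ⟨iv, hi⟩
  rcases j with ⟨jv, hj⟩
  simp only [Fin.val_mk] at h ⊢
  subst h
  rw [aaJ, dif_pos hi]

lemma chiJ_top (hJ : MemMplus J) : chiJ J n = J.charpoly := by
  rw [chiJ]
  have h : CMJ J n = charmatrix J := by
    ext i j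
    rw [CMJ_apply, charmatrix_apply]
    by_cases h1 : (i:ℕ) = (j:ℕ)
    · have hij : i = j := Fin.ext h1
      subst hij
      rw [if_pos rfl, Matrix.diagonal_apply_eq, bbJ_eq]
    · have hne : i ≠ j := fun hc => h1 (by rw [hc])
      rw [if_neg h1, Matrix.diagonal_apply_ne _ hne]
      by_cases h2 : (i:ℕ)+1 = (j:ℕ)
      · rw [if_pos h2, ccJ_eq J i j h2]
        ring
      · rw [if_neg h2]
        by_cases h3 : (j:ℕ)+1 = (i:ℕ)
        · rw [if_pos h3, aaJ_eq J i j h3]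
          ring
        · rw [if_neg h3, hJ.1 i j (by omega)]
          simp
  rw [h]
  rfl

lemma row_eq (hJ : MemMplus J) (v : Fin n → ℝ) (lam : ℝ) (hv : J.mulVec v = lam • v)
    (i : ℕ) (hi : i < n) :
    (if h : 1 ≤ i then aaJ J (i-1) * v ⟨i-1, by omega⟩ else 0) + bbJ J i * v ⟨i, hi⟩ +
      (if h : i + 1 < n then ccJ J i * v ⟨i+1, h⟩ else 0) = lam * v ⟨i, hi⟩ := by
  classical
  have hrow := congrFun hv ⟨i, hi⟩
  rw [Matrix.mulVec, dotProduct] at hrow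
  simp only [Pi.smul_apply, smul_eq_mul] at hrow
  rw [← hrow]
  have hdecomp : ∀ j : Fin n, J ⟨i,hi⟩ j * v j =
      (if ((j:ℕ) + 1 = i) then J ⟨i,hi⟩ j * v j else 0)
      + (if ((j:ℕ) = i) then J ⟨i,hi⟩ j * v j else 0)
      + (if ((j:ℕ) = i + 1) then J ⟨i,hi⟩ j * v j else 0) := by
    intro j
    by_cases h1 : (j:ℕ) + 1 = i
    · rw [if_pos h1, if_neg (by omega), if_neg (by omega)]; ring
    · by_cases h2 : (j:ℕ) = i
      · rw [if_neg h1, if_pos h2, if_neg (by omega)]; ring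
      · by_cases h3 : (j:ℕ) = i + 1
        · rw [if_neg h1, if_neg h2, if_pos h3]; ring
        · rw [if_neg h1, if_neg h2, if_neg h3]
          rw [hJ.1 ⟨i,hi⟩ j (by simp; omega)]
          ring
  rw [Finset.sum_congr rfl (fun j _ => hdecomp j)]
  rw [Finset.sum_add_distrib, Finset.sum_add_distrib]
  congr 1
  congr 1
  · -- subdiagonal sum
    by_cases hi1 : 1 ≤ i
    · rw [dif_pos hi1]
      rw [Finset.sum_eq_single (⟨i-1, by omega⟩ : Fin n)]
      · rw [if_pos (by simp; omega)]
        rw [aaJ_eq J ⟨i,hi⟩ ⟨i-1, by omega⟩ (by simp; omega)]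
      · intro b _ hb
        rw [if_neg ?_]
        intro hc
        exact hb (Fin.ext (by simp; omega))
      · intro h; exact absurd (Finset.mem_univ _) h
    · rw [dif_neg hi1]
      refine (Finset.sum_eq_zero ?_).symm
      intro j _
      rw [if_neg (by omega)]
  · -- diagonal sum
    rw [Finset.sum_eq_single (⟨i, hi⟩ : Fin n)]
    · rw [if_pos (by simp), bbJ_eq J ⟨i,hi⟩]
    · intro b _ hb
      rw [if_neg ?_]
      intro hc
      exact hb (Fin.ext (by simpa using hc))
    · intro h; exact absurd (Finset.mem_univ _) h
  · -- superdiagonal sum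
    by_cases hi1 : i + 1 < n
    · rw [dif_pos hi1]
      rw [Finset.sum_eq_single (⟨i+1, hi1⟩ : Fin n)]
      · rw [if_pos (by simp)]
        rw [ccJ_eq J ⟨i,hi⟩ ⟨i+1, hi1⟩ (by simp)]
      · intro b _ hb
        rw [if_neg ?_]
        intro hc
        exact hb (Fin.ext (by simpa using hc))
      · intro h; exact absurd (Finset.mem_univ _) h
    · rw [dif_neg hi1]
      refine (Finset.sum_eq_zero ?_).symm
      intro j _
      rw [if_neg (by have := j.isLt; omega)]

lemma eigen_formula (hJ : MemMplus J) {v : Fin n → ℝ} {lam : ℝ}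
    (hv : J.mulVec v = lam • v) (hn : 0 < n) :
    ∀ (i : ℕ) (hi : i < n), v ⟨i, hi⟩ * (∏ j ∈ Finset.range i, ccJ J j)
      = v ⟨0, hn⟩ * (chiJ J i).eval lam := by
  intro i
  induction i using Nat.strong_induction_on with
  | _ i ih =>
    match i with
    | 0 =>
      intro hi
      simp [chiJ_zero]
    | 1 =>
      intro hi
      have hr := row_eq J hJ v lam hv 0 (by omega)
      rw [dif_neg (by omega), dif_pos hi] at hr
      rw [chiJ_one]
      simp only [eval_sub, eval_X, eval_C, Finset.prod_range_one]
      have : (0:ℕ) + 1 = 1 := rfl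
      nlinarith [hr]
    | (k+2) =>
      intro hi
      have hr := row_eq J hJ v lam hv (k+1) (by omega)
      rw [dif_pos (by omega), dif_pos hi] at hr
      simp only [Nat.add_sub_cancel] at hr
      have ih1 := ih (k+1) (by omega) (by omega)
      have ih0 := ih k (by omega) (by omega)
      have hrec := chiJ_rec J k
      have hPsucc : ∏ j ∈ Finset.range (k+2), ccJ J j
          = (∏ j ∈ Finset.range (k+1), ccJ J j) * ccJ J (k+1) := Finset.prod_range_succ _ _
      have hPsucc' : ∏ j ∈ Finset.range (k+1), ccJ J j
          = (∏ j ∈ Finset.range k, ccJ J j) * ccJ J k := Finset.prod_range_succ _ _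
      rw [hPsucc]
      have hcc : ccJ J (k+1) * v ⟨k+2, hi⟩
          = (lam - bbJ J (k+1)) * v ⟨k+1, by omega⟩ - aaJ J k * v ⟨k, by omega⟩ := by
        linarith [hr]
      calc v ⟨k+2, hi⟩ * ((∏ j ∈ Finset.range (k+1), ccJ J j) * ccJ J (k+1))
          = (ccJ J (k+1) * v ⟨k+2, hi⟩) * (∏ j ∈ Finset.range (k+1), ccJ J j) := by ring
        _ = (lam - bbJ J (k+1)) * (v ⟨k+1, by omega⟩ * ∏ j ∈ Finset.range (k+1), ccJ J j)
            - aaJ J k * ccJ J k * (v ⟨k, by omega⟩ * ∏ j ∈ Finset.range k, ccJ J j) := by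
            rw [hcc, hPsucc']; ring
        _ = (lam - bbJ J (k+1)) * (v ⟨0,hn⟩ * (chiJ J (k+1)).eval lam)
            - aaJ J k * ccJ J k * (v ⟨0,hn⟩ * (chiJ J k).eval lam) := by rw [ih1, ih0]
        _ = v ⟨0,hn⟩ * (chiJ J (k+2)).eval lam := by
            rw [hrec]
            simp only [eval_sub, eval_mul, eval_X, eval_C]
            ring
end assembly


section kappa
variable {n : ℕ} (J : Matrix (Fin n) (Fin n) ℝ) (hJ : MemMplus J)

noncomputable def rfam (m : ℕ) : Fin m → ℝ :=
  Classical.choose (exists_goodpair J hJ m)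

lemma hGP (m : ℕ) : GoodPair J m (rfam J hJ m) (rfam J hJ (m+1)) := by
  obtain ⟨r', h1⟩ := Classical.choose_spec (exists_goodpair J hJ m)
  obtain ⟨r'', h2⟩ := Classical.choose_spec (exists_goodpair J hJ (m+1))
  have he : r' = rfam J hJ (m+1) :=
    prod_X_sub_C_inj h1.2.1 h2.1 ((h1.2.2.2.1).symm.trans h2.2.2.1)
  rwa [he] at h1

lemma rfam_anti (m : ℕ) : StrictAnti (rfam J hJ m) := (hGP J hJ m).1

variable (lam : ℝ)

noncomputable def kap (m : ℕ) : ℕ :=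
  (Finset.univ.filter (fun i : Fin m => lam < rfam J hJ m i)).card

lemma kap_zero : kap J hJ lam 0 = 0 := by
  simp [kap]

lemma kap_le (m : ℕ) : kap J hJ lam m ≤ m := by
  refine le_trans (Finset.card_filter_le _ _) (by simp)

lemma kap_seg (m : ℕ) (i : Fin m) :
    lam < rfam J hJ m i ↔ (i:ℕ) < kap J hJ lam m :=
  strictAnti_filter_segment (rfam_anti J hJ m) lam i

lemma chi_eval_prod (m : ℕ) :
    (chiJ J m).eval lam = ∏ i, (lam - rfam J hJ m i) := by
  rw [(hGP J hJ m).2.2.1, eval_prod]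
  simp

lemma kap_root' {m : ℕ} (h0 : (chiJ J (m+1)).eval lam = 0) :
    kap J hJ lam (m+1) = kap J hJ lam m ∧ (chiJ J m).eval lam ≠ 0 := by
  classical
  have hgp := hGP J hJ m
  have har' : StrictAnti (rfam J hJ (m+1)) := hgp.2.1
  rw [chi_eval_prod J hJ lam (m+1)] at h0
  obtain ⟨j, -, hj⟩ := Finset.prod_eq_zero_iff.mp h0
  have hlam : lam = rfam J hJ (m+1) j := by linarith [sub_eq_zero.mp hj]
  have hiff' : ∀ i : Fin (m+1), lam < rfam J hJ (m+1) i ↔ (i:ℕ) < (j:ℕ) := by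
    intro i
    rw [hlam, har'.lt_iff_gt, Fin.lt_def]
  have hk' : kap J hJ lam (m+1) = (j:ℕ) :=
    seg_card_eq (fun i => lam < rfam J hJ (m+1) i) (kap_le J hJ lam (m+1))
      (by have := j.isLt; omega) (kap_seg J hJ lam (m+1)) hiff'
  have hstrict : ∀ i : Fin m, ((i:ℕ) < (j:ℕ) → lam < rfam J hJ m i)
      ∧ ((j:ℕ) ≤ (i:ℕ) → rfam J hJ m i < lam) := by
    intro i
    constructor
    · intro hlt
      have h1 : rfam J hJ (m+1) i.succ < rfam J hJ m i := (hgp.2.2.2.2 i).2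
      have h2 : rfam J hJ (m+1) j ≤ rfam J hJ (m+1) i.succ :=
        har'.antitone (by rw [Fin.le_def]; simp; omega)
      rw [hlam]; linarith
    · intro hge
      have h1 : rfam J hJ m i < rfam J hJ (m+1) i.castSucc := (hgp.2.2.2.2 i).1
      have h2 : rfam J hJ (m+1) i.castSucc ≤ rfam J hJ (m+1) j :=
        har'.antitone (by rw [Fin.le_def]; simp; omega)
      rw [hlam]; linarith
  have hiff : ∀ i : Fin m, lam < rfam J hJ m i ↔ (i:ℕ) < (j:ℕ) := by
    intro i
    constructor
    · intro h
      by_contra hc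
      have := (hstrict i).2 (by omega)
      linarith
    · exact (hstrict i).1
  have hk : kap J hJ lam m = (j:ℕ) :=
    seg_card_eq (fun i => lam < rfam J hJ m i) (kap_le J hJ lam m)
      (by have := j.isLt; omega) (kap_seg J hJ lam m) hiff
  refine ⟨by omega, ?_⟩
  rw [chi_eval_prod J hJ lam m]
  rw [Finset.prod_ne_zero_iff]
  intro i _
  rcases Nat.lt_or_ge (i:ℕ) (j:ℕ) with h | h
  · have := (hstrict i).1 h; intro hc; rw [sub_eq_zero] at hc; linarith
  · have := (hstrict i).2 h; intro hc; rw [sub_eq_zero] at hc; linarith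

lemma kap_root {m : ℕ} (h0 : (chiJ J m).eval lam = 0) :
    kap J hJ lam (m+1) = kap J hJ lam m + 1 ∧ kap J hJ lam m < m := by
  classical
  have hgp := hGP J hJ m
  have har : StrictAnti (rfam J hJ m) := hgp.1
  have har' : StrictAnti (rfam J hJ (m+1)) := hgp.2.1
  rw [chi_eval_prod J hJ lam m] at h0
  obtain ⟨j, -, hj⟩ := Finset.prod_eq_zero_iff.mp h0
  have hlam : lam = rfam J hJ m j := by linarith [sub_eq_zero.mp hj]
  have hiff : ∀ i : Fin m, lam < rfam J hJ m i ↔ (i:ℕ) < (j:ℕ) := by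
    intro i
    rw [hlam, har.lt_iff_gt, Fin.lt_def]
  have hk : kap J hJ lam m = (j:ℕ) :=
    seg_card_eq (fun i => lam < rfam J hJ m i) (kap_le J hJ lam m)
      (by have := j.isLt; omega) (kap_seg J hJ lam m) hiff
  have hiff' : ∀ i : Fin (m+1), lam < rfam J hJ (m+1) i ↔ (i:ℕ) < (j:ℕ)+1 := by
    intro i
    constructor
    · intro h
      by_contra hc
      have h1 : rfam J hJ (m+1) j.succ < rfam J hJ m j := (hgp.2.2.2.2 j).2
      have h2 : rfam J hJ (m+1) i ≤ rfam J hJ (m+1) j.succ :=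
        har'.antitone (by rw [Fin.le_def]; simp; omega)
      rw [hlam] at h
      linarith
    · intro h
      have h1 : rfam J hJ m j < rfam J hJ (m+1) j.castSucc := (hgp.2.2.2.2 j).1
      have h2 : rfam J hJ (m+1) j.castSucc ≤ rfam J hJ (m+1) i :=
        har'.antitone (by rw [Fin.le_def]; simp; omega)
      rw [hlam]
      linarith
  have hk' : kap J hJ lam (m+1) = (j:ℕ)+1 :=
    seg_card_eq (fun i => lam < rfam J hJ (m+1) i) (kap_le J hJ lam (m+1))
      (by have := j.isLt; omega) (kap_seg J hJ lam (m+1)) hiff'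
  have := j.isLt
  omega

lemma kap_step (m : ℕ) : kap J hJ lam m ≤ kap J hJ lam (m+1) ∧
    kap J hJ lam (m+1) ≤ kap J hJ lam m + 1 := by
  have hgp := hGP J hJ m
  constructor
  · rcases Nat.eq_zero_or_pos (kap J hJ lam m) with h0 | hpos
    · omega
    · have hklem := kap_le J hJ lam m
      set k0 := kap J hJ lam m - 1 with hk0
      have hi0 : k0 < m := by omega
      have h1 : lam < rfam J hJ m ⟨k0, hi0⟩ :=
        (kap_seg J hJ lam m ⟨k0, hi0⟩).mpr (by simp; omega)
      have h2 : rfam J hJ m ⟨k0, hi0⟩ < rfam J hJ (m+1) (⟨k0, hi0⟩ : Fin m).castSucc :=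
        (hgp.2.2.2.2 _).1
      have h3 := (kap_seg J hJ lam (m+1) (⟨k0, hi0⟩ : Fin m).castSucc).mp (by linarith)
      simp at h3
      omega
  · by_contra hc
    push_neg at hc
    have hkle' := kap_le J hJ lam (m+1)
    have hkle := kap_le J hJ lam m
    set k := kap J hJ lam m with hkdef
    have hj : k < m := by omega
    have hi1 : k + 1 < m + 1 := by omega
    have h1 : lam < rfam J hJ (m+1) ⟨k+1, hi1⟩ :=
      (kap_seg J hJ lam (m+1) ⟨k+1, hi1⟩).mpr (by simp; omega)
    have he : (⟨k+1, hi1⟩ : Fin (m+1)) = (⟨k, hj⟩ : Fin m).succ := by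
      apply Fin.ext; simp
    have h2 : rfam J hJ (m+1) (⟨k, hj⟩ : Fin m).succ < rfam J hJ m ⟨k, hj⟩ :=
      (hgp.2.2.2.2 _).2
    rw [he] at h1
    have h3 := (kap_seg J hJ lam m ⟨k, hj⟩).mp (by linarith)
    simp at h3
    omega

lemma kap_mono {a b : ℕ} (hab : a ≤ b) : kap J hJ lam a ≤ kap J hJ lam b := by
  induction b with
  | zero => simp at hab; subst hab; omega
  | succ b ih =>
    rcases Nat.lt_or_ge a (b+1) with h | h
    · exact le_trans (ih (by omega)) (kap_step J hJ lam b).1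
    · have : a = b + 1 := by omega
      subst this; omega

/-- sign of `chi_m(lam)` when nonzero -/
lemma kap_sign {m : ℕ} (h0 : (chiJ J m).eval lam ≠ 0) :
    0 < (-1:ℝ)^(kap J hJ lam m) * (chiJ J m).eval lam := by
  classical
  rw [chi_eval_prod J hJ lam m] at h0 ⊢
  have hne : ∀ i ∈ (Finset.univ : Finset (Fin m)), lam - rfam J hJ m i ≠ 0 :=
    Finset.prod_ne_zero_iff.mp h0
  have hcard : ((Finset.univ : Finset (Fin m)).filter
      (fun i => lam - rfam J hJ m i < 0)).card = kap J hJ lam m := by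
    congr 1
    apply Finset.filter_congr
    intro i _
    simp only [sub_neg]
  have := prod_sign_finset Finset.univ (fun i => lam - rfam J hJ m i) hne
  rwa [hcard] at this

end kappa

lemma getLast_congr {α : Type*} (l1 l2 : List α) (h1 : l1 ≠ []) (h : l1 = l2) :
    l1.getLast h1 = l2.getLast (h ▸ h1) := by subst h; rfl

theorem stmt12 {n : ℕ} (J : Matrix (Fin n) (Fin n) ℝ) (hJ : MemMplus J) :
    (∃ α : Fin n → ℝ, StrictAnti α ∧
      J.charpoly = ∏ i : Fin n, (X - C (α i))) ∧
    (∀ (α : Fin n → ℝ) (v : Fin n → ℝ) (k : Fin n),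
      StrictAnti α → J.charpoly = ∏ i : Fin n, (X - C (α i)) →
      v ≠ 0 → J.mulVec v = α k • v →
      (sMinus v = (k : ℕ) ∧ sPlus v = (k : ℕ)) ∧
      ((k : ℕ) = 0 → (∀ i, 0 < v i) ∨ (∀ i, v i < 0)) ∧
      ((k : ℕ) = n - 1 →
        ∀ i : Fin n, ∀ hi : (i : ℕ) + 1 < n, v i * v ⟨(i : ℕ) + 1, hi⟩ < 0)) := by
  constructor
  · refine ⟨rfam J hJ n, rfam_anti J hJ n, ?_⟩
    rw [← chiJ_top J hJ]
    exact (hGP J hJ n).2.2.1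
  intro α v k hα hchar hv0 heig
  have hα_eq : α = rfam J hJ n := by
    apply prod_X_sub_C_inj hα (rfam_anti J hJ n)
    rw [← hchar, ← chiJ_top J hJ]
    exact (hGP J hJ n).2.2.1
  set lam := α k with hlamdef
  have hn : 0 < n := k.pos
  have hroot : (chiJ J n).eval lam = 0 := by
    rw [chi_eval_prod J hJ lam n]
    apply Finset.prod_eq_zero (Finset.mem_univ k)
    rw [hlamdef, hα_eq, sub_self]
  have heig' : J.mulVec v = lam • v := heig
  obtain ⟨N, rfl⟩ : ∃ N, n = N + 1 := ⟨n - 1, by omega⟩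
  have hef := eigen_formula J hJ heig' hn
  have hPpos : ∀ m, 0 < ∏ j ∈ Finset.range m, ccJ J j :=
    fun m => Finset.prod_pos (fun j _ => ccJ_pos J hJ j)
  have hv0ne : v ⟨0, hn⟩ ≠ 0 := by
    intro hz
    apply hv0
    funext i
    have h1 := hef i.1 i.isLt
    rw [hz, zero_mul] at h1
    have hp := hPpos i.1
    have h2 : v ⟨i.1, i.isLt⟩ = 0 := by
      rcases mul_eq_zero.mp h1 with h | h
      · exact h
      · exact absurd h (ne_of_gt hp)
    exact h2
  set σ := v ⟨0, hn⟩ with hσ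
  have hvz : ∀ i : Fin (N+1), (v i = 0 ↔ (chiJ J i.1).eval lam = 0) := by
    intro i
    have h1 := hef i.1 i.isLt
    constructor
    · intro h
      rw [h, zero_mul] at h1
      rcases mul_eq_zero.mp h1.symm with hc | hc
      · exact absurd hc hv0ne
      · exact hc
    · intro h
      rw [h, mul_zero] at h1
      rcases mul_eq_zero.mp h1 with hc | hc
      · exact hc
      · exact absurd hc (ne_of_gt (hPpos i.1))
  have hsgn : ∀ i : Fin (N+1), v i ≠ 0 →
      0 < σ * (-1:ℝ)^(kap J hJ lam i.1) * v i := by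
    intro i hne
    have heval_ne : (chiJ J i.1).eval lam ≠ 0 := fun hc => hne ((hvz i).mpr hc)
    have hs := kap_sign J hJ lam heval_ne
    have h1 := hef i.1 i.isLt
    have h2 : (σ * (-1:ℝ)^(kap J hJ lam i.1) * v i) * (∏ j ∈ Finset.range i.1, ccJ J j)
        = σ^2 * ((-1:ℝ)^(kap J hJ lam i.1) * (chiJ J i.1).eval lam) := by
      have h3 : (σ * (-1:ℝ)^(kap J hJ lam i.1) * v i) * (∏ j ∈ Finset.range i.1, ccJ J j)
          = σ * (-1:ℝ)^(kap J hJ lam i.1) *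
            (v ⟨i.1, i.isLt⟩ * ∏ j ∈ Finset.range i.1, ccJ J j) := by ring
      rw [h3, h1]
      ring
    have hσ2 : 0 < σ^2 := (sq_nonneg σ).lt_of_ne ((pow_ne_zero 2 hv0ne).symm)
    have h4 : 0 < σ^2 * ((-1:ℝ)^(kap J hJ lam i.1) * (chiJ J i.1).eval lam) :=
      mul_pos hσ2 hs
    rw [← h2] at h4
    nlinarith [hPpos i.1]
  have hend := kap_root' J hJ lam (m := N) hroot
  have hkapn : kap J hJ lam (N+1) = (k:ℕ) := by
    apply seg_card_eq (fun i : Fin (N+1) => lam < rfam J hJ (N+1) i)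
      (kap_le J hJ lam (N+1)) (by have := k.isLt; omega) (kap_seg J hJ lam (N+1))
    intro i
    rw [← hα_eq, hlamdef, hα.lt_iff_gt, Fin.lt_def]
  have hkN : kap J hJ lam N = (k:ℕ) := by omega
  have hvlast : v (Fin.last N) ≠ 0 := fun hc => hend.2 ((hvz (Fin.last N)).mp hc)
  set f : Fin (N+1) → ℝ × ℕ := fun i => (v i, kap J hJ lam i.1) with hf
  have hlist : List.ofFn f = f 0 :: List.ofFn (fun i : Fin N => f i.succ) :=
    List.ofFn_succ
  have hE : ∀ q ∈ f 0 :: List.ofFn (fun i : Fin N => f i.succ), q.1 ≠ 0 →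
      0 < σ * (-1:ℝ)^q.2 * q.1 := by
    rw [← hlist]
    intro q hq hq1
    obtain ⟨i, rfl⟩ := (List.mem_ofFn).mp hq
    exact hsgn i hq1
  have hchain : List.Chain' SRel (f 0 :: List.ofFn (fun i : Fin N => f i.succ)) := by
    rw [← hlist]
    simp only [List.Chain']
    rw [List.isChain_iff_getElem]
    intro i hilen
    simp only [List.length_ofFn] at hilen
    rw [List.getElem_ofFn, List.getElem_ofFn]
    refine ⟨?_, ?_, ?_⟩
    · have := kap_step J hJ lam i
      simp only [hf]
      omega
    · intro hz
      simp only [hf] at hz ⊢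
      have hchi := (hvz ⟨i, by omega⟩).mp hz
      have hr := kap_root J hJ lam hchi
      have hne1 : (chiJ J (i+1)).eval lam ≠ 0 := by
        intro hc
        exact (kap_root' J hJ lam hc).2 hchi
      exact ⟨fun hc => hne1 ((hvz ⟨i+1, by omega⟩).mp hc), hr.1⟩
    · intro hz
      simp only [hf] at hz ⊢
      have hchi := (hvz ⟨i+1, by omega⟩).mp hz
      exact (kap_root' J hJ lam hchi).1
  have hne1 : List.ofFn f ≠ [] := by simp
  have hlast1 : (List.ofFn f).getLast hne1 = f (Fin.last N) := by
    rw [List.getLast_eq_getElem, List.getElem_ofFn]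
    congr 1
    apply Fin.ext
    simp
  have hlastlist : (f 0 :: List.ofFn (fun i : Fin N => f i.succ)).getLast (by simp)
      = f (Fin.last N) := by
    rw [← getLast_congr _ _ hne1 hlist]
    exact hlast1
  obtain ⟨hM1, hM2⟩ := master σ N (List.ofFn (fun i : Fin N => f i.succ)) (f 0)
    (by simp) hE hchain hv0ne (by rw [hlastlist]; exact hvlast)
  have hmap : (f 0 :: List.ofFn (fun i : Fin N => f i.succ)).map Prod.fst
      = List.ofFn v := by
    rw [← hlist, List.map_ofFn]
    rfl
  have hsm : sMinus v = (k:ℕ) := by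
    rw [sMinus]
    rw [hmap] at hM1
    rw [hlastlist] at hM1
    simpa [hf, kap_zero, hkN] using hM1
  have hcomp : ∀ y : Fin (N+1) → ℝ, IsCompletion v y →
      countSignChanges (List.ofFn y) = (k:ℕ) := by
    intro y hy
    have hf2 : List.Forall₂ CompRelR
        ((f 0 :: List.ofFn (fun i : Fin N => f i.succ)).map Prod.fst) (List.ofFn y) := by
      rw [hmap, List.forall₂_iff_get]
      refine ⟨by simp, ?_⟩
      intro i h1 h2
      rw [List.get_ofFn, List.get_ofFn]
      exact hy _
    have hcc := hM2 (List.ofFn y) hf2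
    rw [hlastlist] at hcc
    simpa [hf, kap_zero, hkN] using hcc
  have hsp : sPlus v = (k:ℕ) := by
    rw [sPlus]
    have hset : { m | ∃ y : Fin (N+1) → ℝ, IsCompletion v y ∧
        m = countSignChanges (List.ofFn y) } = {((k:ℕ) : ℕ)} := by
      ext m
      simp only [Set.mem_setOf_eq, Set.mem_singleton_iff]
      constructor
      · rintro ⟨y, hy, rfl⟩
        exact hcomp y hy
      · intro hm
        set y : Fin (N+1) → ℝ := fun i => if v i = 0 then 1 else v i with hy
        have hyc : IsCompletion v y := by
          intro i
          by_cases h : v i = 0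
          · exact Or.inr ⟨h, Or.inl (by simp [hy, h])⟩
          · exact Or.inl ⟨h, by simp [hy, h]⟩
        exact ⟨y, hyc, by rw [hm, hcomp y hyc]⟩
    rw [hset, csSup_singleton]
  refine ⟨⟨hsm, hsp⟩, ?_, ?_⟩
  · intro hk0
    have hallkap : ∀ m, m ≤ N → kap J hJ lam m = 0 := by
      intro m hm
      have := kap_mono J hJ lam hm
      rw [hkN, hk0] at this
      omega
    have hallne : ∀ i : Fin (N+1), v i ≠ 0 := by
      intro i hzi
      have hchi := (hvz i).mp hzi
      have hr := kap_root J hJ lam hchi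
      rcases Nat.lt_or_ge i.1 N with h | h
      · have h1 := hallkap (i.1+1) (by omega)
        have h0 := hallkap i.1 (by omega)
        omega
      · have hieq : i = Fin.last N := Fin.ext (by have := i.isLt; simp; omega)
        rw [hieq] at hzi
        exact hvlast hzi
    have hpos : ∀ i : Fin (N+1), 0 < σ * v i := by
      intro i
      have hh := hsgn i (hallne i)
      rw [hallkap i.1 (by have := i.isLt; omega), pow_zero, mul_one] at hh
      exact hh
    rcases lt_trichotomy σ 0 with hσneg | hσ0 | hσpos
    · right; intro i; nlinarith [hpos i]
    · exact absurd hσ0 hv0ne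
    · left; intro i; nlinarith [hpos i]
  · intro hkN'
    have hkNval : (k:ℕ) = N := by omega
    have hstepd : ∀ (d m' : ℕ), kap J hJ lam (m' + d) ≤ kap J hJ lam m' + d := by
      intro d
      induction d with
      | zero => intro m'; simp
      | succ d ih =>
        intro m'
        have h1 := kap_step J hJ lam (m' + d)
        have h2 := ih m'
        have e : kap J hJ lam (m' + (d+1)) = kap J hJ lam ((m'+d)+1) := rfl
        omega
    have hkap_all : ∀ m, m ≤ N → kap J hJ lam m = m := by
      intro m hm
      have h1 := hstepd (N - m) m
      have e : m + (N - m) = N := by omega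
      rw [e] at h1
      have h2 := kap_le J hJ lam m
      rw [hkN, hkNval] at h1
      omega
    have hallne : ∀ i : Fin (N+1), v i ≠ 0 := by
      intro i hzi
      have hchi := (hvz i).mp hzi
      have hr := kap_root J hJ lam hchi
      have := hkap_all i.1 (by have := i.isLt; omega)
      omega
    intro i hi
    have h1 := hsgn i (hallne i)
    have h2 := hsgn ⟨i.1+1, hi⟩ (hallne ⟨i.1+1, hi⟩)
    rw [hkap_all i.1 (by have := i.isLt; omega)] at h1
    have hval : ((⟨i.1+1, hi⟩ : Fin (N+1)) : ℕ) = i.1 + 1 := rfl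
    rw [hval, hkap_all (i.1+1) (by omega)] at h2
    apply sgn_opp (c := σ * (-1:ℝ)^(i.1)) h1
    have hre : σ * (-1:ℝ)^(i.1+1) * v ⟨i.1+1, hi⟩
        = -(σ * (-1:ℝ)^(i.1) * v ⟨i.1+1, hi⟩) := by
      rw [pow_succ]; ring
    rw [hre] at h2
    linarith
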